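/- Let (A_1, …, A_T), (O_1, …, O_T), and B be random variables on a common probability space with values in finite types, and suppose the action sequence A^T = (A_1,…,A_T) and the observation sequence O^T = (O_1,…,O_T) are conditionally independent given B (all dependence is mediated by the finite bridge transcript B). If H[B] ≤ b, then I(A^T → O^T) + I(O^{T−1} → A^T) = I[A^T : O^T] ≤ I[A^T : B] ≤ H[B] ≤ b. (Theorem 'Finite shared-bridge budget': outward influence and inward plasticity through a shared finite bridge obey a capacity budget.) -/

import Mathlib

open MeasureTheory Real

section InfoDefs

variable {Ω : Type*} [MeasurableSpace Ω]

/-- Shannon entropy (natural log) of a random variable `X` with values in a finite type,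
with respect to the measure `μ`. -/
noncomputable def ent (μ : Measure Ω) {S : Type*} [Fintype S] (X : Ω → S) : ℝ :=
  ∑ s : S, Real.negMulLog (μ (X ⁻¹' {s})).toReal

/-- Conditional entropy `H[X | Y] = H[X, Y] - H[Y]`. -/
noncomputable def condEnt (μ : Measure Ω) {S T : Type*} [Fintype S] [Fintype T]
    (X : Ω → S) (Y : Ω → T) : ℝ :=
  ent μ (fun ω => (X ω, Y ω)) - ent μ Y

/-- Mutual information `I[X : Y] = H[X] + H[Y] - H[X, Y]`. -/
noncomputable def mutInfo (μ : Measure Ω) {S T : Type*} [Fintype S] [Fintype T]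
    (X : Ω → S) (Y : Ω → T) : ℝ :=
  ent μ X + ent μ Y - ent μ (fun ω => (X ω, Y ω))

/-- Conditional mutual information `I[X : Y | Z] = H[X | Z] + H[Y | Z] - H[X, Y | Z]`. -/
noncomputable def condMutInfo (μ : Measure Ω) {S T U : Type*} [Fintype S] [Fintype T]
    [Fintype U] (X : Ω → S) (Y : Ω → T) (Z : Ω → U) : ℝ :=
  condEnt μ X Z + condEnt μ Y Z - condEnt μ (fun ω => (X ω, Y ω)) Z

end InfoDefs

/-- The prefix random variable `X^t = (X_1, …, X_t)` of a sequence of random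
variables indexed from `1`. -/
def prefixRV {Ω : Type*} {F : ℕ → Type*} (X : (t : ℕ) → Ω → F t) (t : ℕ) :
    Ω → ((i : Fin t) → F (i.val + 1)) :=
  fun ω i => X (i.val + 1) ω

/- ============ Auxiliary abstract lemmas ============ -/

section AbstractLemmas
variable {α β : Type*} [Fintype α] [Fintype β]

lemma aux_negMulLog_sum_le (f : α → ℝ) (hf : ∀ a, 0 ≤ f a) :
    negMulLog (∑ a, f a) ≤ ∑ a, negMulLog (f a) := by
  have hS : 0 ≤ ∑ a, f a := Finset.sum_nonneg fun a _ => hf a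
  rcases hS.eq_or_lt with h | h
  · have hz : ∀ a ∈ Finset.univ, f a = 0 :=
      (Finset.sum_eq_zero_iff_of_nonneg (fun a _ => hf a)).1 h.symm
    rw [← h, negMulLog_zero]
    exact Finset.sum_nonneg fun a ha => by rw [hz a ha, negMulLog_zero]
  · have : negMulLog (∑ a, f a) = ∑ a, (-(f a) * Real.log (∑ a, f a)) := by
      rw [negMulLog, ← Finset.sum_mul, Finset.sum_neg_distrib]
    rw [this]
    apply Finset.sum_le_sum
    intro a _
    rcases (hf a).eq_or_lt with h0 | h0
    · simp [← h0]
    · rw [negMulLog]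
      have hle : Real.log (f a) ≤ Real.log (∑ a, f a) :=
        Real.log_le_log h0 (Finset.single_le_sum (fun a _ => hf a) (Finset.mem_univ a))
      nlinarith

/-- Algebraic rewriting of the conditional-MI kernel as a single sum. -/
lemma aux_G_form (q : α → β → ℝ) :
    (∑ a, negMulLog (∑ b, q a b)) + (∑ b, negMulLog (∑ a, q a b))
      - negMulLog (∑ a, ∑ b, q a b) - ∑ a, ∑ b, negMulLog (q a b)
    = ∑ a, ∑ b, q a b * (Real.log (q a b) + Real.log (∑ a', ∑ b', q a' b')
        - Real.log (∑ b', q a b') - Real.log (∑ a', q a' b)) := by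
  have h1 : (∑ a, negMulLog (∑ b, q a b)) = ∑ a, ∑ b, (-(q a b) * Real.log (∑ b', q a b')) := by
    refine Finset.sum_congr rfl fun a _ => ?_
    rw [negMulLog, ← Finset.sum_mul, Finset.sum_neg_distrib]
  have h2 : (∑ b, negMulLog (∑ a, q a b)) = ∑ a, ∑ b, (-(q a b) * Real.log (∑ a', q a' b)) := by
    rw [Finset.sum_comm]
    refine Finset.sum_congr rfl fun b _ => ?_
    rw [negMulLog, ← Finset.sum_mul, Finset.sum_neg_distrib]
  have h3 : negMulLog (∑ a, ∑ b, q a b)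
      = ∑ a, ∑ b, (-(q a b) * Real.log (∑ a', ∑ b', q a' b')) := by
    rw [negMulLog, neg_mul, Finset.sum_mul, ← Finset.sum_neg_distrib]
    refine Finset.sum_congr rfl fun a _ => ?_
    rw [Finset.sum_mul, ← Finset.sum_neg_distrib]
    exact Finset.sum_congr rfl fun b _ => (neg_mul _ _).symm
  rw [h1, h2, h3, ← Finset.sum_add_distrib, ← Finset.sum_sub_distrib, ← Finset.sum_sub_distrib]
  refine Finset.sum_congr rfl fun a _ => ?_
  rw [← Finset.sum_add_distrib, ← Finset.sum_sub_distrib, ← Finset.sum_sub_distrib]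
  refine Finset.sum_congr rfl fun b _ => ?_
  rw [negMulLog]
  ring

lemma aux_G_nonneg (q : α → β → ℝ) (hq : ∀ a b, 0 ≤ q a b) :
    0 ≤ (∑ a, negMulLog (∑ b, q a b)) + (∑ b, negMulLog (∑ a, q a b))
      - negMulLog (∑ a, ∑ b, q a b) - ∑ a, ∑ b, negMulLog (q a b) := by
  rw [aux_G_form]
  set m := ∑ a', ∑ b', q a' b' with hmdef
  have hm0 : 0 ≤ m := Finset.sum_nonneg fun a _ => Finset.sum_nonneg fun b _ => hq a b
  rcases hm0.eq_or_lt with hmz | hmpos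
  · have hz : ∀ a b, q a b = 0 := by
      intro a b
      have h1 := (Finset.sum_eq_zero_iff_of_nonneg
        (fun a _ => Finset.sum_nonneg fun b _ => hq a b)).1 hmz.symm a (Finset.mem_univ a)
      exact (Finset.sum_eq_zero_iff_of_nonneg (fun b _ => hq a b)).1 h1 b (Finset.mem_univ b)
    simp [hz]
  set qA := fun a => ∑ b, q a b with hqA
  set qB := fun b => ∑ a, q a b with hqB
  have hqA0 : ∀ a, 0 ≤ qA a := fun a => Finset.sum_nonneg fun b _ => hq a b
  have hqB0 : ∀ b, 0 ≤ qB b := fun b => Finset.sum_nonneg fun a _ => hq a b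
  have hA : ∑ a, qA a = m := rfl
  have hB : ∑ b, qB b = m := Finset.sum_comm
  set r := fun a b => qA a * qB b / m with hr
  have key : ∀ a b, q a b * (Real.log (q a b) + Real.log m
      - Real.log (qA a) - Real.log (qB b)) = -(q a b * Real.log (r a b / q a b)) := by
    intro a b
    rcases (hq a b).eq_or_lt with h0 | h0
    · simp [← h0]
    · have hApos : 0 < qA a :=
        lt_of_lt_of_le h0 (Finset.single_le_sum (fun b _ => hq a b) (Finset.mem_univ b))
      have hBpos : 0 < qB b :=
        lt_of_lt_of_le h0 (Finset.single_le_sum (fun a _ => hq a b) (Finset.mem_univ a))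
      rw [hr]
      rw [Real.log_div (by positivity) h0.ne', Real.log_div (by positivity) hmpos.ne',
        Real.log_mul hApos.ne' hBpos.ne']
      ring
  have hsum : ∀ a b, q a b * Real.log (r a b / q a b) ≤ r a b - q a b := by
    intro a b
    rcases (hq a b).eq_or_lt with h0 | h0
    · rw [← h0]
      simp only [zero_mul, sub_zero]
      exact div_nonneg (mul_nonneg (hqA0 a) (hqB0 b)) hm0
    · have hApos : 0 < qA a :=
        lt_of_lt_of_le h0 (Finset.single_le_sum (fun b _ => hq a b) (Finset.mem_univ b))
      have hBpos : 0 < qB b :=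
        lt_of_lt_of_le h0 (Finset.single_le_sum (fun a _ => hq a b) (Finset.mem_univ a))
      have hrpos : 0 < r a b := by rw [hr]; positivity
      have hlog : Real.log (r a b / q a b) ≤ r a b / q a b - 1 :=
        Real.log_le_sub_one_of_pos (by positivity)
      calc q a b * Real.log (r a b / q a b) ≤ q a b * (r a b / q a b - 1) :=
            mul_le_mul_of_nonneg_left hlog (hq a b)
        _ = r a b - q a b := by field_simp
  have hrsum : ∑ a, ∑ b, r a b = m := by
    have h1 : ∀ a, ∑ b, r a b = qA a * m / m := by
      intro a
      rw [hr]
      simp only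
      rw [← Finset.sum_div, ← Finset.mul_sum, hB]
    rw [Finset.sum_congr rfl (fun a _ => h1 a), ← Finset.sum_div, ← Finset.sum_mul, hA,
      mul_div_assoc, div_self hmpos.ne', mul_one]
  have hdiff : ∑ a, ∑ b, (r a b - q a b) = 0 := by
    rw [Finset.sum_congr rfl (fun a _ => (Finset.sum_sub_distrib (s := Finset.univ) _ _)),
      Finset.sum_sub_distrib, hrsum]
    exact sub_self m
  calc (0:ℝ) = -∑ a, ∑ b, (r a b - q a b) := by rw [hdiff, neg_zero]
    _ ≤ -∑ a, ∑ b, q a b * Real.log (r a b / q a b) := by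
        apply neg_le_neg
        exact Finset.sum_le_sum fun a _ => Finset.sum_le_sum fun b _ => hsum a b
    _ = ∑ a, ∑ b, q a b * (Real.log (q a b) + Real.log m - Real.log (qA a) - Real.log (qB b)) := by
        rw [← Finset.sum_neg_distrib]
        refine Finset.sum_congr rfl fun a _ => ?_
        rw [← Finset.sum_neg_distrib]
        exact Finset.sum_congr rfl fun b _ => (key a b).symm

lemma aux_G_eq_zero (q : α → β → ℝ) (hq : ∀ a b, 0 ≤ q a b)
    (hprod : ∀ a b, q a b * (∑ a', ∑ b', q a' b') = (∑ b', q a b') * (∑ a', q a' b)) :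
    (∑ a, negMulLog (∑ b, q a b)) + (∑ b, negMulLog (∑ a, q a b))
      - negMulLog (∑ a, ∑ b, q a b) - ∑ a, ∑ b, negMulLog (q a b) = 0 := by
  rw [aux_G_form]
  refine Finset.sum_eq_zero fun a _ => Finset.sum_eq_zero fun b _ => ?_
  rcases (hq a b).eq_or_lt with h0 | h0
  · rw [← h0, zero_mul]
  · have hApos : 0 < ∑ b', q a b' :=
      lt_of_lt_of_le h0 (Finset.single_le_sum (fun b _ => hq a b) (Finset.mem_univ b))
    have hBpos : 0 < ∑ a', q a' b :=
      lt_of_lt_of_le h0 (Finset.single_le_sum (fun a _ => hq a b) (Finset.mem_univ a))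
    have hmpos : 0 < ∑ a', ∑ b', q a' b' :=
      lt_of_lt_of_le hApos (Finset.single_le_sum
        (fun a _ => Finset.sum_nonneg fun b _ => hq a b) (Finset.mem_univ a))
    have : Real.log (q a b) + Real.log (∑ a', ∑ b', q a' b')
        - Real.log (∑ b', q a b') - Real.log (∑ a', q a' b) = 0 := by
      rw [← Real.log_mul h0.ne' hmpos.ne', hprod a b, Real.log_mul hApos.ne' hBpos.ne']
      ring
    rw [this, mul_zero]

end AbstractLemmas

/- ============ Measure-level lemmas ============ -/

section MeasureLayer
variable {Ω : Type*} [MeasurableSpace Ω] (μ : Measure Ω) [IsProbabilityMeasure μ]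
variable {S T U : Type*} [Fintype S] [Fintype T] [Fintype U]

omit [IsProbabilityMeasure μ] in
/-- Partition a measure of a measurable set by the fibers of a random variable. -/
lemma aux_measure_partition [IsFiniteMeasure μ] (E : Set Ω) (hE : MeasurableSet E) (Y : Ω → T)
    (hY : ∀ t, MeasurableSet (Y ⁻¹' {t})) :
    (μ E).toReal = ∑ t, (μ (E ∩ Y ⁻¹' {t})).toReal := by
  classical
  have h1 : E = ⋃ t ∈ (Finset.univ : Finset T), E ∩ Y ⁻¹' {t} := by
    ext ω; simp
  have h2 : μ E = ∑ t, μ (E ∩ Y ⁻¹' {t}) := by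
    conv_lhs => rw [h1]
    refine measure_biUnion_finset ?_ (fun t _ => hE.inter (hY t))
    intro t _ t' _ hne
    simp only [Set.disjoint_left]
    rintro ω ⟨-, h⟩ ⟨-, h'⟩
    exact hne (h.symm.trans h')
  rw [h2, ENNReal.toReal_sum (fun t _ => measure_ne_top μ _)]

omit [IsProbabilityMeasure μ] in
/-- Entropy is invariant under injective recoding. -/
lemma aux_ent_comp_inj {f : S → T} (hf : Function.Injective f) (X : Ω → S) :
    ent μ (fun ω => f (X ω)) = ent μ X := by
  classical
  have h0 : ∀ t : T, t ∉ Finset.univ.image f →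
      negMulLog (μ ((fun ω => f (X ω)) ⁻¹' {t})).toReal = 0 := by
    intro t ht
    have : (fun ω => f (X ω)) ⁻¹' {t} = ∅ := by
      ext ω
      simp only [Set.mem_preimage, Set.mem_singleton_iff, Set.mem_empty_iff_false, iff_false]
      intro h
      exact ht (Finset.mem_image.2 ⟨X ω, Finset.mem_univ _, h⟩)
    simp [this]
  rw [ent, ← Finset.sum_subset (Finset.subset_univ (Finset.univ.image f)) (fun t _ ht => h0 t ht)]
  rw [Finset.sum_image (fun a _ b _ h => hf h)]
  refine Finset.sum_congr rfl fun s _ => ?_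
  have : (fun ω => f (X ω)) ⁻¹' {f s} = X ⁻¹' {s} := by
    ext ω; simp [hf.eq_iff]
  rw [this]

lemma aux_ent_unique [Unique S] (X : Ω → S) : ent μ X = 0 := by
  rw [ent, Fintype.sum_unique]
  have : X ⁻¹' {default} = Set.univ := by
    ext ω
    simp only [Set.mem_preimage, Set.mem_singleton_iff, Set.mem_univ, iff_true]
    exact Subsingleton.elim _ _
  simp [this]

omit [IsProbabilityMeasure μ] in
lemma aux_ent_pair_eq (X : Ω → S) (Y : Ω → T) :
    ent μ (fun ω => (X ω, Y ω)) = ∑ s, ∑ t, negMulLog (μ (X ⁻¹' {s} ∩ Y ⁻¹' {t})).toReal := by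
  rw [ent, Fintype.sum_prod_type]
  refine Finset.sum_congr rfl fun s _ => Finset.sum_congr rfl fun t _ => ?_
  have : (fun ω => (X ω, Y ω)) ⁻¹' {(s, t)} = X ⁻¹' {s} ∩ Y ⁻¹' {t} := by
    ext ω; simp [Prod.ext_iff]
  rw [this]

lemma aux_ent_le_ent_pair (X : Ω → S) (Y : Ω → T)
    (hX : ∀ s, MeasurableSet (X ⁻¹' {s})) (hY : ∀ t, MeasurableSet (Y ⁻¹' {t})) :
    ent μ X ≤ ent μ (fun ω => (X ω, Y ω)) := by
  rw [aux_ent_pair_eq, ent]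
  refine Finset.sum_le_sum fun s _ => ?_
  rw [aux_measure_partition μ _ (hX s) Y hY]
  exact aux_negMulLog_sum_le _ (fun t => ENNReal.toReal_nonneg)

end MeasureLayer

section Key
variable {Ω : Type*} [MeasurableSpace Ω] (μ : Measure Ω) [IsProbabilityMeasure μ]
variable {S T U : Type*} [Fintype S] [Fintype T] [Fintype U]
variable (X : Ω → S) (Y : Ω → T) (Z : Ω → U)
variable (hX : ∀ s, MeasurableSet (X ⁻¹' {s})) (hY : ∀ t, MeasurableSet (Y ⁻¹' {t}))
  (hZ : ∀ u, MeasurableSet (Z ⁻¹' {u}))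

include hX hY hZ

lemma aux_marg_XZ (s : S) (z : U) :
    (μ (X ⁻¹' {s} ∩ Z ⁻¹' {z})).toReal
      = ∑ t, (μ (X ⁻¹' {s} ∩ Y ⁻¹' {t} ∩ Z ⁻¹' {z})).toReal := by
  rw [aux_measure_partition μ _ ((hX s).inter (hZ z)) Y hY]
  refine Finset.sum_congr rfl fun t _ => ?_
  have : X ⁻¹' {s} ∩ Z ⁻¹' {z} ∩ Y ⁻¹' {t} = X ⁻¹' {s} ∩ Y ⁻¹' {t} ∩ Z ⁻¹' {z} := by
    ext ω
    simp only [Set.mem_inter_iff, Set.mem_preimage, Set.mem_singleton_iff]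
    tauto
  rw [this]

lemma aux_marg_YZ (t : T) (z : U) :
    (μ (Y ⁻¹' {t} ∩ Z ⁻¹' {z})).toReal
      = ∑ s, (μ (X ⁻¹' {s} ∩ Y ⁻¹' {t} ∩ Z ⁻¹' {z})).toReal := by
  rw [aux_measure_partition μ _ ((hY t).inter (hZ z)) X hX]
  refine Finset.sum_congr rfl fun s _ => ?_
  have : Y ⁻¹' {t} ∩ Z ⁻¹' {z} ∩ X ⁻¹' {s} = X ⁻¹' {s} ∩ Y ⁻¹' {t} ∩ Z ⁻¹' {z} := by
    ext ω
    simp only [Set.mem_inter_iff, Set.mem_preimage, Set.mem_singleton_iff]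
    tauto
  rw [this]

lemma aux_marg_Z (z : U) :
    (μ (Z ⁻¹' {z})).toReal = ∑ s, ∑ t, (μ (X ⁻¹' {s} ∩ Y ⁻¹' {t} ∩ Z ⁻¹' {z})).toReal := by
  rw [aux_measure_partition μ _ (hZ z) X hX]
  refine Finset.sum_congr rfl fun s _ => ?_
  rw [aux_measure_partition μ _ ((hZ z).inter (hX s)) Y hY]
  refine Finset.sum_congr rfl fun t _ => ?_
  have : Z ⁻¹' {z} ∩ X ⁻¹' {s} ∩ Y ⁻¹' {t} = X ⁻¹' {s} ∩ Y ⁻¹' {t} ∩ Z ⁻¹' {z} := by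
    ext ω
    simp only [Set.mem_inter_iff, Set.mem_preimage, Set.mem_singleton_iff]
    tauto
  rw [this]

lemma aux_entXZ_decomp :
    ent μ (fun ω => (X ω, Z ω))
      = ∑ z, ∑ s, negMulLog (∑ t, (μ (X ⁻¹' {s} ∩ Y ⁻¹' {t} ∩ Z ⁻¹' {z})).toReal) := by
  rw [aux_ent_pair_eq, Finset.sum_comm]
  exact Finset.sum_congr rfl fun z _ => Finset.sum_congr rfl fun s _ => by
    rw [aux_marg_XZ μ X Y Z hX hY hZ s z]

lemma aux_entYZ_decomp :
    ent μ (fun ω => (Y ω, Z ω))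
      = ∑ z, ∑ t, negMulLog (∑ s, (μ (X ⁻¹' {s} ∩ Y ⁻¹' {t} ∩ Z ⁻¹' {z})).toReal) := by
  rw [aux_ent_pair_eq, Finset.sum_comm]
  exact Finset.sum_congr rfl fun z _ => Finset.sum_congr rfl fun t _ => by
    rw [aux_marg_YZ μ X Y Z hX hY hZ t z]

lemma aux_entZ_decomp :
    ent μ Z = ∑ z, negMulLog (∑ s, ∑ t, (μ (X ⁻¹' {s} ∩ Y ⁻¹' {t} ∩ Z ⁻¹' {z})).toReal) := by
  rw [ent]
  exact Finset.sum_congr rfl fun z _ => by rw [aux_marg_Z μ X Y Z hX hY hZ z]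

lemma aux_entXYZ_decomp :
    ent μ (fun ω => ((X ω, Y ω), Z ω))
      = ∑ z, ∑ s, ∑ t, negMulLog (μ (X ⁻¹' {s} ∩ Y ⁻¹' {t} ∩ Z ⁻¹' {z})).toReal := by
  rw [aux_ent_pair_eq, Finset.sum_comm]
  refine Finset.sum_congr rfl fun z _ => ?_
  rw [Fintype.sum_prod_type]
  refine Finset.sum_congr rfl fun s _ => Finset.sum_congr rfl fun t _ => ?_
  have : (fun ω => (X ω, Y ω)) ⁻¹' {(s, t)} = X ⁻¹' {s} ∩ Y ⁻¹' {t} := by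
    ext ω; simp [Prod.ext_iff]
  rw [this]

lemma aux_ent_submodular :
    ent μ Z + ent μ (fun ω => ((X ω, Y ω), Z ω))
      ≤ ent μ (fun ω => (X ω, Z ω)) + ent μ (fun ω => (Y ω, Z ω)) := by
  rw [aux_entXZ_decomp μ X Y Z hX hY hZ, aux_entYZ_decomp μ X Y Z hX hY hZ,
    aux_entZ_decomp μ X Y Z hX hY hZ, aux_entXYZ_decomp μ X Y Z hX hY hZ]
  rw [← Finset.sum_add_distrib, ← Finset.sum_add_distrib]
  refine Finset.sum_le_sum fun z _ => ?_
  have := aux_G_nonneg (fun s t => (μ (X ⁻¹' {s} ∩ Y ⁻¹' {t} ∩ Z ⁻¹' {z})).toReal)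
    (fun s t => ENNReal.toReal_nonneg)
  linarith

lemma aux_ent_ci_eq
    (hCI : ∀ s t u, μ (X ⁻¹' {s} ∩ Y ⁻¹' {t} ∩ Z ⁻¹' {u}) * μ (Z ⁻¹' {u})
      = μ (X ⁻¹' {s} ∩ Z ⁻¹' {u}) * μ (Y ⁻¹' {t} ∩ Z ⁻¹' {u})) :
    ent μ (fun ω => (X ω, Z ω)) + ent μ (fun ω => (Y ω, Z ω))
      = ent μ Z + ent μ (fun ω => ((X ω, Y ω), Z ω)) := by
  rw [aux_entXZ_decomp μ X Y Z hX hY hZ, aux_entYZ_decomp μ X Y Z hX hY hZ,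
    aux_entZ_decomp μ X Y Z hX hY hZ, aux_entXYZ_decomp μ X Y Z hX hY hZ]
  rw [← Finset.sum_add_distrib, ← Finset.sum_add_distrib]
  refine Finset.sum_congr rfl fun z _ => ?_
  have := aux_G_eq_zero (fun s t => (μ (X ⁻¹' {s} ∩ Y ⁻¹' {t} ∩ Z ⁻¹' {z})).toReal)
    (fun s t => ENNReal.toReal_nonneg) (fun s t => ?_)
  · linarith
  · rw [← aux_marg_Z μ X Y Z hX hY hZ z, ← aux_marg_XZ μ X Y Z hX hY hZ s z,
      ← aux_marg_YZ μ X Y Z hX hY hZ t z, ← ENNReal.toReal_mul, ← ENNReal.toReal_mul, hCI s t z]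

end Key

/- ============ Prefix recoding machinery ============ -/

section PrefixLemmas

/-- Split the last coordinate off a prefix tuple. -/
def auxSplitLast {F : ℕ → Type*} (t : ℕ) (p : (i : Fin (t + 1)) → F (i.val + 1)) :
    F (t + 1) × ((i : Fin t) → F (i.val + 1)) :=
  (p ⟨t, Nat.lt_succ_self t⟩, fun i => p ⟨i.val, Nat.lt_succ_of_lt i.isLt⟩)

lemma auxSplitLast_injective {F : ℕ → Type*} (t : ℕ) :
    Function.Injective (auxSplitLast (F := F) t) := by
  intro p q h
  have h1 : p ⟨t, Nat.lt_succ_self t⟩ = q ⟨t, Nat.lt_succ_self t⟩ := congrArg Prod.fst h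
  have h2 := congrArg Prod.snd h
  funext j
  rcases Nat.lt_or_ge j.val t with hj | hj
  · have h3 := congrFun h2 ⟨j.val, hj⟩
    have hjj : (⟨j.val, Nat.lt_succ_of_lt hj⟩ : Fin (t + 1)) = j := Fin.ext rfl
    simpa [auxSplitLast, hjj] using h3
  · have hjt : j = ⟨t, Nat.lt_succ_self t⟩ :=
      Fin.ext (le_antisymm (Nat.lt_succ_iff.1 j.isLt) hj)
    rw [hjt]; exact h1

/-- Recoding `(A^{t+1}, O^{t+1}) ↦ ((A^{t+1}, O_{t+1}), O^t)`. -/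
def auxRearr1 {F G : ℕ → Type*} (t : ℕ)
    (p : ((i : Fin (t + 1)) → F (i.val + 1)) × ((i : Fin (t + 1)) → G (i.val + 1))) :
    (((i : Fin (t + 1)) → F (i.val + 1)) × G (t + 1)) × ((i : Fin t) → G (i.val + 1)) :=
  ((p.1, (auxSplitLast t p.2).1), (auxSplitLast t p.2).2)

lemma auxRearr1_injective {F G : ℕ → Type*} (t : ℕ) :
    Function.Injective (auxRearr1 (F := F) (G := G) t) := by
  intro p q h
  have h1 : p.1 = q.1 := congrArg (fun r => r.1.1) h
  have h2 : auxSplitLast t p.2 = auxSplitLast t q.2 :=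
    Prod.ext (congrArg (fun r => r.1.2) h) (congrArg (fun r => r.2) h)
  exact Prod.ext h1 (auxSplitLast_injective t h2)

/-- Recoding `(A^{t+1}, O^t) ↦ ((O^t, A_{t+1}), A^t)`. -/
def auxRearr2 {F G : ℕ → Type*} (t : ℕ)
    (p : ((i : Fin (t + 1)) → F (i.val + 1)) × ((i : Fin t) → G (i.val + 1))) :
    (((i : Fin t) → G (i.val + 1)) × F (t + 1)) × ((i : Fin t) → F (i.val + 1)) :=
  ((p.2, (auxSplitLast t p.1).1), (auxSplitLast t p.1).2)

lemma auxRearr2_injective {F G : ℕ → Type*} (t : ℕ) :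
    Function.Injective (auxRearr2 (F := F) (G := G) t) := by
  intro p q h
  have h1 : p.2 = q.2 := congrArg (fun r => r.1.1) h
  have h2 : auxSplitLast t p.1 = auxSplitLast t q.1 :=
    Prod.ext (congrArg (fun r => r.1.2) h) (congrArg (fun r => r.2) h)
  exact Prod.ext (auxSplitLast_injective t h2) h1

/-- Reassociation `((x, y), z) ↦ ((x, z), y)`. -/
def auxReassoc {S T V : Type*} (p : (S × T) × V) : (S × V) × T := ((p.1.1, p.2), p.1.2)

lemma auxReassoc_injective {S T V : Type*} :
    Function.Injective (auxReassoc (S := S) (T := T) (V := V)) := by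
  intro p q h
  exact Prod.ext
    (Prod.ext (congrArg (fun r => r.1.1) h) (congrArg (fun r => r.2) h))
    (congrArg (fun r => r.1.2) h)

end PrefixLemmas

theorem finite_shared_bridge_budget
    {Ω : Type*} [MeasurableSpace Ω] (μ : Measure Ω) [IsProbabilityMeasure μ] (T : ℕ)
    {𝒜 𝒪 : ℕ → Type*} [∀ t, Fintype (𝒜 t)] [∀ t, Fintype (𝒪 t)]
    [∀ t, MeasurableSpace (𝒜 t)] [∀ t, MeasurableSingletonClass (𝒜 t)]
    [∀ t, MeasurableSpace (𝒪 t)] [∀ t, MeasurableSingletonClass (𝒪 t)]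
    {ℬ : Type*} [Fintype ℬ] [MeasurableSpace ℬ] [MeasurableSingletonClass ℬ]
    (A : (t : ℕ) → Ω → 𝒜 t) (O : (t : ℕ) → Ω → 𝒪 t) (B : Ω → ℬ)
    (hA : ∀ t, Measurable (A t)) (hO : ∀ t, Measurable (O t)) (hB : Measurable B)
    (hCI : ∀ (a : (i : Fin T) → 𝒜 (i.val + 1)) (o : (i : Fin T) → 𝒪 (i.val + 1)) (c : ℬ),
      μ (prefixRV A T ⁻¹' {a} ∩ prefixRV O T ⁻¹' {o} ∩ B ⁻¹' {c}) * μ (B ⁻¹' {c})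
        = μ (prefixRV A T ⁻¹' {a} ∩ B ⁻¹' {c}) * μ (prefixRV O T ⁻¹' {o} ∩ B ⁻¹' {c}))
    (b : ℝ) (hb : ent μ B ≤ b) :
    (∑ t ∈ Finset.range T,
        condMutInfo μ (prefixRV A (t + 1)) (O (t + 1)) (prefixRV O t))
      + (∑ t ∈ Finset.range T,
        condMutInfo μ (prefixRV O t) (A (t + 1)) (prefixRV A t))
      = mutInfo μ (prefixRV A T) (prefixRV O T) ∧
    mutInfo μ (prefixRV A T) (prefixRV O T) ≤ mutInfo μ (prefixRV A T) B ∧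
    mutInfo μ (prefixRV A T) B ≤ ent μ B ∧ ent μ B ≤ b := by
  -- measurability of fibers
  have hAm : ∀ (t : ℕ) (a : (i : Fin t) → 𝒜 (i.val + 1)),
      MeasurableSet (prefixRV A t ⁻¹' {a}) := by
    intro t a
    have : prefixRV A t ⁻¹' {a} = ⋂ i : Fin t, A (i.val + 1) ⁻¹' {a i} := by
      ext ω
      simp [prefixRV, funext_iff]
    rw [this]
    exact MeasurableSet.iInter fun i => hA _ (MeasurableSet.singleton _)
  have hOm : ∀ (t : ℕ) (o : (i : Fin t) → 𝒪 (i.val + 1)),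
      MeasurableSet (prefixRV O t ⁻¹' {o}) := by
    intro t o
    have : prefixRV O t ⁻¹' {o} = ⋂ i : Fin t, O (i.val + 1) ⁻¹' {o i} := by
      ext ω
      simp [prefixRV, funext_iff]
    rw [this]
    exact MeasurableSet.iInter fun i => hO _ (MeasurableSet.singleton _)
  have hBm : ∀ c : ℬ, MeasurableSet (B ⁻¹' {c}) := fun c => hB (MeasurableSet.singleton c)
  refine ⟨?_, ?_, ?_, hb⟩
  · -- Goal 1 : directed information sum identity
    set f : ℕ → ℝ := fun t => ent μ (prefixRV O t) + ent μ (prefixRV A t)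
      - ent μ (fun ω => (prefixRV A t ω, prefixRV O t ω)) with hf
    have hstep : ∀ t, condMutInfo μ (prefixRV A (t + 1)) (O (t + 1)) (prefixRV O t)
        + condMutInfo μ (prefixRV O t) (A (t + 1)) (prefixRV A t) = f (t + 1) - f t := by
      intro t
      have r1 : ent μ (fun ω => (O (t + 1) ω, prefixRV O t ω)) = ent μ (prefixRV O (t + 1)) :=
        aux_ent_comp_inj μ (auxSplitLast_injective t) (prefixRV O (t + 1))
      have r3 : ent μ (fun ω => ((prefixRV A (t + 1) ω, O (t + 1) ω), prefixRV O t ω))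
          = ent μ (fun ω => (prefixRV A (t + 1) ω, prefixRV O (t + 1) ω)) :=
        aux_ent_comp_inj μ (auxRearr1_injective t)
          (fun ω => (prefixRV A (t + 1) ω, prefixRV O (t + 1) ω))
      have r4 : ent μ (fun ω => (prefixRV O t ω, prefixRV A t ω))
          = ent μ (fun ω => (prefixRV A t ω, prefixRV O t ω)) :=
        aux_ent_comp_inj μ Prod.swap_injective (fun ω => (prefixRV A t ω, prefixRV O t ω))
      have r5 : ent μ (fun ω => (A (t + 1) ω, prefixRV A t ω)) = ent μ (prefixRV A (t + 1)) :=
        aux_ent_comp_inj μ (auxSplitLast_injective t) (prefixRV A (t + 1))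
      have r6 : ent μ (fun ω => ((prefixRV O t ω, A (t + 1) ω), prefixRV A t ω))
          = ent μ (fun ω => (prefixRV A (t + 1) ω, prefixRV O t ω)) :=
        aux_ent_comp_inj μ (auxRearr2_injective t)
          (fun ω => (prefixRV A (t + 1) ω, prefixRV O t ω))
      simp only [condMutInfo, condEnt, hf]
      rw [r1, r3, r4, r5, r6]
      ring
    rw [← Finset.sum_add_distrib, Finset.sum_congr rfl (fun t _ => hstep t),
      Finset.sum_range_sub f]
    have hf0 : f 0 = 0 := by
      haveI h1 : Unique ((i : Fin 0) → 𝒜 (i.val + 1)) :=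
        ⟨⟨fun i => i.elim0⟩, fun p => funext fun i => i.elim0⟩
      haveI h2 : Unique ((i : Fin 0) → 𝒪 (i.val + 1)) :=
        ⟨⟨fun i => i.elim0⟩, fun p => funext fun i => i.elim0⟩
      haveI h3 : Unique (((i : Fin 0) → 𝒜 (i.val + 1)) × ((i : Fin 0) → 𝒪 (i.val + 1))) :=
        ⟨⟨(default, default)⟩, fun p => Prod.ext (Subsingleton.elim _ _) (Subsingleton.elim _ _)⟩
      rw [hf]
      simp only
      rw [aux_ent_unique, aux_ent_unique, aux_ent_unique]
      ring
    rw [hf0, hf, mutInfo]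
    ring
  · -- Goal 2 : data-processing via the bridge
    have hci := aux_ent_ci_eq μ (prefixRV A T) (prefixRV O T) B (hAm T) (hOm T) hBm hCI
    have hsub := aux_ent_submodular μ (prefixRV A T) B (prefixRV O T) (hAm T) hBm (hOm T)
    have hswap : ent μ (fun ω => (B ω, prefixRV O T ω))
        = ent μ (fun ω => (prefixRV O T ω, B ω)) :=
      aux_ent_comp_inj μ Prod.swap_injective (fun ω => (prefixRV O T ω, B ω))
    have hre : ent μ (fun ω => ((prefixRV A T ω, B ω), prefixRV O T ω))
        = ent μ (fun ω => ((prefixRV A T ω, prefixRV O T ω), B ω)) :=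
      aux_ent_comp_inj μ auxReassoc_injective
        (fun ω => ((prefixRV A T ω, prefixRV O T ω), B ω))
    simp only [mutInfo]
    linarith
  · -- Goal 3 : I[A : B] ≤ H[B]
    have := aux_ent_le_ent_pair μ (prefixRV A T) B (hAm T) hBm
    simp only [mutInfo]
    linarith
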